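/- For any fixed production plan x* ∈ ℝ^T, the maximum of the total cost F(x*, S) over the scenario box Γ is attained at an extreme scenario: there exists S ∈ Γ_ext = ∏_{t=1}^T {d⁻_t, d⁺_t} such that F(x*, S) = sup_{S' ∈ Γ} F(x*, S'). Consequently max_{S ∈ Γ} F(x*, S) = max_{S ∈ Γ_ext} F(x*, S). -/

import Mathlib

/-- Cumulative sum up to period `t`. -/
noncomputable def cum {T : ℕ} (x : Fin T → ℝ) (t : Fin T) : ℝ :=
  ∑ i ∈ Finset.Iic t, x i

/-- Total cost `F(x, S)` of production plan `x` under demand scenario `S`. -/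
noncomputable def totalCost {T : ℕ} (cI cB : Fin T → ℝ) (x S : Fin T → ℝ) : ℝ :=
  ∑ t : Fin T, max (cI t * (cum x t - cum S t)) (cB t * (cum S t - cum x t))

/-- The scenario box `Γ = ∏_t [d⁻_t, d⁺_t]`. -/
def scenarioBox {T : ℕ} (dlo dhi : Fin T → ℝ) : Set (Fin T → ℝ) :=
  Set.univ.pi fun t => Set.Icc (dlo t) (dhi t)

/-- The set of extreme scenarios `Γ_ext = ∏_t {d⁻_t, d⁺_t}`. -/
def extremeScenarios {T : ℕ} (dlo dhi : Fin T → ℝ) : Set (Fin T → ℝ) :=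
  Set.univ.pi fun t => ({dlo t, dhi t} : Set ℝ)

lemma cum_comb {T : ℕ} (a b : ℝ) (S S' : Fin T → ℝ) (t : Fin T) :
    cum (a • S + b • S') t = a * cum S t + b * cum S' t := by
  simp [cum, Finset.mul_sum, Finset.sum_add_distrib]

lemma totalCost_convex {T : ℕ} (cI cB : Fin T → ℝ)
    (hcI : ∀ t, 0 ≤ cI t) (hcB : ∀ t, 0 ≤ cB t) (x : Fin T → ℝ)
    (a b : ℝ) (ha : 0 ≤ a) (hb : 0 ≤ b) (hab : a + b = 1) (S S' : Fin T → ℝ) :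
    totalCost cI cB x (a • S + b • S') ≤
      a * totalCost cI cB x S + b * totalCost cI cB x S' := by
  unfold totalCost
  rw [Finset.mul_sum, Finset.mul_sum, ← Finset.sum_add_distrib]
  refine Finset.sum_le_sum fun t _ => ?_
  rw [cum_comb]
  set X := cum x t
  set u := cum S t
  set v := cum S' t
  have hb' : b = 1 - a := by linarith
  subst hb'
  have h1 : cI t * (X - u) ≤ max (cI t * (X - u)) (cB t * (u - X)) := le_max_left _ _
  have h2 : cB t * (u - X) ≤ max (cI t * (X - u)) (cB t * (u - X)) := le_max_right _ _
  have h3 : cI t * (X - v) ≤ max (cI t * (X - v)) (cB t * (v - X)) := le_max_left _ _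
  have h4 : cB t * (v - X) ≤ max (cI t * (X - v)) (cB t * (v - X)) := le_max_right _ _
  have ha1 : 0 ≤ 1 - a := hb
  apply max_le
  · have e : cI t * (X - (a * u + (1 - a) * v)) =
        a * (cI t * (X - u)) + (1 - a) * (cI t * (X - v)) := by ring
    rw [e]
    exact add_le_add (mul_le_mul_of_nonneg_left h1 ha) (mul_le_mul_of_nonneg_left h3 ha1)
  · have e : cB t * ((a * u + (1 - a) * v) - X) =
        a * (cB t * (u - X)) + (1 - a) * (cB t * (v - X)) := by ring
    rw [e]
    exact add_le_add (mul_le_mul_of_nonneg_left h2 ha) (mul_le_mul_of_nonneg_left h4 ha1)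

lemma coord_step {T : ℕ} (cI cB : Fin T → ℝ)
    (hcI : ∀ t, 0 ≤ cI t) (hcB : ∀ t, 0 ≤ cB t)
    (dlo dhi : Fin T → ℝ) (x : Fin T → ℝ)
    (S : Fin T → ℝ) (hS : S ∈ scenarioBox dlo dhi) (t : Fin T) :
    ∃ c : ℝ, (c = dlo t ∨ c = dhi t) ∧
      totalCost cI cB x S ≤ totalCost cI cB x (Function.update S t c) := by
  classical
  have hSt : dlo t ≤ S t ∧ S t ≤ dhi t := hS t (Set.mem_univ t)
  rcases eq_or_lt_of_le (hSt.1.trans hSt.2) with heq | hlt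
  · refine ⟨dlo t, Or.inl rfl, ?_⟩
    have hSeq : S t = dlo t := le_antisymm (heq ▸ hSt.2) hSt.1
    have h : Function.update S t (dlo t) = S := by
      funext i
      by_cases h : i = t
      · subst h; simp [hSeq]
      · simp [Function.update_of_ne h]
    rw [h]
  · set lo := dlo t
    set hi := dhi t
    set s := S t
    have hd : 0 < hi - lo := by linarith
    set a := (hi - s) / (hi - lo) with ha_def
    set b := (s - lo) / (hi - lo) with hb_def
    have ha : 0 ≤ a := div_nonneg (by linarith [hSt.2]) hd.le
    have hb : 0 ≤ b := div_nonneg (by linarith [hSt.1]) hd.le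
    have hab : a + b = 1 := by
      rw [ha_def, hb_def, ← add_div, div_eq_one_iff_eq (by linarith)]
      ring
    have hmid : a • (Function.update S t lo) + b • (Function.update S t hi) = S := by
      funext i
      by_cases h : i = t
      · subst h
        simp only [Pi.add_apply, Pi.smul_apply, Function.update_self, smul_eq_mul]
        rw [ha_def, hb_def]
        field_simp
        ring
      · simp only [Pi.add_apply, Pi.smul_apply, Function.update_of_ne h, smul_eq_mul]
        linear_combination S i * hab
    have hconv := totalCost_convex cI cB hcI hcB x a b ha hb hab
      (Function.update S t lo) (Function.update S t hi)
    rw [hmid] at hconv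
    rcases le_total (totalCost cI cB x (Function.update S t lo))
        (totalCost cI cB x (Function.update S t hi)) with hle | hle
    · refine ⟨hi, Or.inr rfl, hconv.trans ?_⟩
      have h1 : a * totalCost cI cB x (Function.update S t lo) ≤
          a * totalCost cI cB x (Function.update S t hi) :=
        mul_le_mul_of_nonneg_left hle ha
      calc a * totalCost cI cB x (Function.update S t lo) +
            b * totalCost cI cB x (Function.update S t hi)
          ≤ a * totalCost cI cB x (Function.update S t hi) +
            b * totalCost cI cB x (Function.update S t hi) := by linarith
        _ = totalCost cI cB x (Function.update S t hi) := by
            rw [← add_mul, hab, one_mul]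
    · refine ⟨lo, Or.inl rfl, hconv.trans ?_⟩
      have h1 : b * totalCost cI cB x (Function.update S t hi) ≤
          b * totalCost cI cB x (Function.update S t lo) :=
        mul_le_mul_of_nonneg_left hle hb
      calc a * totalCost cI cB x (Function.update S t lo) +
            b * totalCost cI cB x (Function.update S t hi)
          ≤ a * totalCost cI cB x (Function.update S t lo) +
            b * totalCost cI cB x (Function.update S t lo) := by linarith
        _ = totalCost cI cB x (Function.update S t lo) := by
            rw [← add_mul, hab, one_mul]

lemma push_extreme {T : ℕ} (cI cB : Fin T → ℝ)
    (hcI : ∀ t, 0 ≤ cI t) (hcB : ∀ t, 0 ≤ cB t)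
    (dlo dhi : Fin T → ℝ) (hdd : ∀ t, dlo t ≤ dhi t) (x : Fin T → ℝ)
    (A : Finset (Fin T)) :
    ∀ S, S ∈ scenarioBox dlo dhi →
    ∃ S', S' ∈ scenarioBox dlo dhi ∧ (∀ t ∈ A, S' t = dlo t ∨ S' t = dhi t) ∧
      (∀ t ∉ A, S' t = S t) ∧
      totalCost cI cB x S ≤ totalCost cI cB x S' := by
  classical
  induction A using Finset.induction with
  | empty => exact fun S hS => ⟨S, hS, by simp, fun _ _ => rfl, le_rfl⟩
  | @insert t A ht ih =>
    intro S hS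
    obtain ⟨c, hc, hle⟩ := coord_step cI cB hcI hcB dlo dhi x S hS t
    have hupd : Function.update S t c ∈ scenarioBox dlo dhi := by
      intro i _
      by_cases h : i = t
      · subst h
        simp only [Function.update_self]
        rcases hc with rfl | rfl
        · exact ⟨le_rfl, hdd i⟩
        · exact ⟨hdd i, le_rfl⟩
      · simpa [Function.update_of_ne h] using hS i (Set.mem_univ i)
    obtain ⟨S', hS', hext, hagree, hle'⟩ := ih (Function.update S t c) hupd
    refine ⟨S', hS', ?_, ?_, hle.trans hle'⟩
    · intro i hi
      rcases Finset.mem_insert.mp hi with rfl | hiA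
      · rw [hagree i ht, Function.update_self]
        exact hc
      · exact hext i hiA
    · intro i hi
      have hit : i ≠ t := fun h => hi (h ▸ Finset.mem_insert_self t A)
      have hiA : i ∉ A := fun h => hi (Finset.mem_insert_of_mem h)
      rw [hagree i hiA, Function.update_of_ne hit]

/-- for any fixed plan `x*`, the maximum of `F(x*, ·)` over the scenario
box `Γ` is attained at an extreme scenario; consequently the maximum over `Γ` equals
the maximum over `Γ_ext`. -/
theorem stmt1 {T : ℕ} (cI cB : Fin T → ℝ)
    (hcI : ∀ t, 0 ≤ cI t) (hcB : ∀ t, 0 ≤ cB t)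
    (dlo dhi : Fin T → ℝ) (hd0 : ∀ t, 0 ≤ dlo t) (hdd : ∀ t, dlo t ≤ dhi t)
    (x : Fin T → ℝ) :
    (∃ S ∈ extremeScenarios dlo dhi,
      ∀ S' ∈ scenarioBox dlo dhi, totalCost cI cB x S' ≤ totalCost cI cB x S) ∧
    sSup (totalCost cI cB x '' scenarioBox dlo dhi) =
      sSup (totalCost cI cB x '' extremeScenarios dlo dhi) := by
  classical
  have hcompact : IsCompact (scenarioBox dlo dhi) :=
    isCompact_univ_pi fun t => isCompact_Icc
  have hne : (scenarioBox dlo dhi).Nonempty :=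
    ⟨dlo, fun t _ => ⟨le_rfl, hdd t⟩⟩
  have hcont : Continuous (totalCost cI cB x) := by
    unfold totalCost cum
    exact continuous_finset_sum _ fun t _ =>
      ((continuous_const.mul (continuous_const.sub
        (continuous_finset_sum _ fun i _ => continuous_apply i))).max
      (continuous_const.mul ((continuous_finset_sum _ fun i _ =>
        continuous_apply i).sub continuous_const)))
  obtain ⟨S0, hS0, hmax⟩ := hcompact.exists_isMaxOn hne hcont.continuousOn
  obtain ⟨Sx, hSx, hext, _, hle⟩ := push_extreme cI cB hcI hcB dlo dhi hdd x
    Finset.univ S0 hS0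
  have hSx_ext : Sx ∈ extremeScenarios dlo dhi := by
    intro t _
    rcases hext t (Finset.mem_univ t) with h | h
    · exact Or.inl h
    · exact Or.inr h
  have hbig : ∀ S' ∈ scenarioBox dlo dhi, totalCost cI cB x S' ≤ totalCost cI cB x Sx :=
    fun S' hS' => (hmax hS').trans hle
  refine ⟨⟨Sx, hSx_ext, hbig⟩, ?_⟩
  have hsub : extremeScenarios dlo dhi ⊆ scenarioBox dlo dhi := by
    intro S hS t _
    rcases hS t (Set.mem_univ t) with h | h
    · exact h ▸ ⟨le_rfl, hdd t⟩
    · exact h ▸ ⟨hdd t, le_rfl⟩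
  have himg : totalCost cI cB x '' extremeScenarios dlo dhi ⊆
      totalCost cI cB x '' scenarioBox dlo dhi := Set.image_mono hsub
  have hbdd : BddAbove (totalCost cI cB x '' scenarioBox dlo dhi) := by
    refine ⟨totalCost cI cB x Sx, ?_⟩
    rintro y ⟨S', hS', rfl⟩
    exact hbig S' hS'
  apply le_antisymm
  · refine csSup_le (hne.image _) ?_
    rintro y ⟨S', hS', rfl⟩
    exact (hbig S' hS').trans (le_csSup (hbdd.mono himg) ⟨Sx, hSx_ext, rfl⟩)
  · exact csSup_le_csSup hbdd ⟨totalCost cI cB x Sx, Sx, hSx_ext, rfl⟩ himg
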